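/- Let p be an odd prime and A' = {−(p−1)/2, …, (p−1)/2} ⊆ Z. For every k ≥ 1 and every g ∈ A', the number of ordered k-tuples from A' summing to g is at least the number of ordered k-tuples from A' summing to (p−1)/2. -/

import Mathlib

open Finset

private noncomputable def NN (m : ℤ) (k : ℕ) (s : ℤ) : ℕ :=
  ((Fintype.piFinset (fun _ : Fin k => Finset.Icc (-m) m)).filter
    (fun f => ∑ i, f i = s)).card

private lemma NN_neg (m : ℤ) (k : ℕ) (s : ℤ) : NN m k (-s) = NN m k s := by
  unfold NN
  apply Finset.card_nbij' (fun f i => -(f i)) (fun f i => -(f i)) <;>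
  · intro f hf
    simp only [Finset.mem_coe, mem_filter, Fintype.mem_piFinset, mem_Icc, Finset.sum_neg_distrib] at *
    first
    | (refine ⟨fun i => ?_, ?_⟩
       · have := hf.1 i; omega
       · omega)
    | funext i; ring

private lemma NN_succ (m : ℤ) (k : ℕ) (s : ℤ) :
    NN m (k + 1) s = ∑ d ∈ Finset.Icc (-m) m, NN m k (s - d) := by
  unfold NN
  rw [← Finset.card_sigma]
  apply Finset.card_nbij' (fun f => ⟨f 0, Fin.tail f⟩)
    (fun x => Fin.cons x.1 x.2)
  · intro f hf
    simp only [Finset.mem_coe, mem_filter, Fintype.mem_piFinset, mem_sigma, mem_Icc] at *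
    obtain ⟨h1, h2⟩ := hf
    rw [Fin.sum_univ_succ] at h2
    exact ⟨h1 0, fun i => h1 i.succ, by simp only [Fin.tail]; omega⟩
  · rintro ⟨d, f⟩ hx
    simp only [Finset.mem_coe, mem_filter, Fintype.mem_piFinset, mem_sigma, mem_Icc] at *
    obtain ⟨hd, h1, h2⟩ := hx
    refine ⟨fun i => ?_, ?_⟩
    · induction i using Fin.cases <;> simp [hd, h1]
    · rw [Fin.sum_univ_succ]
      simp only [Fin.cons_zero, Fin.cons_succ]
      omega
  · intro f hf
    exact Fin.cons_self_tail f
  · rintro ⟨d, f⟩ hx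
    simp [Fin.tail_cons]

private lemma NN_window (m : ℤ) (k : ℕ) (s : ℤ) :
    ∑ d ∈ Finset.Icc (-m) m, NN m k (s - d) = ∑ t ∈ Finset.Icc (s - m) (s + m), NN m k t := by
  refine Finset.sum_nbij' (fun d => s - d) (fun t => s - t) ?_ ?_ ?_ ?_ ?_ <;>
    simp only [mem_Icc] <;> intros <;> first | omega | (congr 1; omega) | trivial

private lemma NN_mono (m : ℤ) (hm : 0 ≤ m) :
    ∀ k : ℕ, ∀ a b : ℤ, 0 ≤ a → a ≤ b → NN m k b ≤ NN m k a := by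
  intro k
  induction k with
  | zero =>
    intro a b ha hab
    rcases eq_or_lt_of_le hab with rfl | hlt
    · exact le_rfl
    · have : NN m 0 b = 0 := by
        unfold NN
        rw [Finset.card_eq_zero, Finset.filter_eq_empty_iff]
        intro f _
        simp only [Finset.univ_eq_empty, Finset.sum_empty]
        omega
      omega
  | succ k IH =>
    have habs : ∀ x y : ℤ, |x| ≤ |y| → NN m k y ≤ NN m k x := by
      intro x y h
      have habs' : ∀ z : ℤ, NN m k z = NN m k |z| := by
        intro z
        rcases abs_choice z with h' | h'
        · rw [h']
        · rw [h', NN_neg]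
      rw [habs' x, habs' y]
      exact IH _ _ (abs_nonneg x) h
    intro a b ha hab
    refine Int.le_induction (motive := fun b _ => NN m (k + 1) b ≤ NN m (k + 1) a) le_rfl ?_ b hab
    intro b hb IH2
    refine le_trans ?_ IH2
    have hb0 : 0 ≤ b := le_trans ha hb
    rw [NN_succ, NN_window, NN_succ, NN_window]
    have e1 : Finset.Icc (b + 1 - m) (b + 1 + m) =
        insert (b + m + 1) (Finset.Icc (b - m + 1) (b + m)) := by
      ext x; simp only [mem_Icc, mem_insert]; omega
    have e2 : Finset.Icc (b - m) (b + m) =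
        insert (b - m) (Finset.Icc (b - m + 1) (b + m)) := by
      ext x; simp only [mem_Icc, mem_insert]; omega
    rw [e1, e2, Finset.sum_insert (by simp only [mem_Icc]; omega),
      Finset.sum_insert (by simp only [mem_Icc]; omega)]
    have : NN m k (b + m + 1) ≤ NN m k (b - m) := by
      apply habs
      rw [abs_le]
      constructor <;> [skip; skip] <;>
        · have h1 : |b + m + 1| = b + m + 1 := abs_of_nonneg (by omega)
          rw [h1]; omega
    omega

private lemma NN_abs (m : ℤ) (hm : 0 ≤ m) (k : ℕ) (x y : ℤ) (h : |x| ≤ |y|) :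
    NN m k y ≤ NN m k x := by
  have habs' : ∀ z : ℤ, NN m k z = NN m k |z| := by
    intro z
    rcases abs_choice z with h' | h'
    · rw [h']
    · rw [h', NN_neg]
  rw [habs' x, habs' y]
  exact NN_mono m hm k _ _ (abs_nonneg x) h

theorem balanced_rep_count_ge_extreme (p : ℕ) (hp : p.Prime) (hodd : Odd p)
    (k : ℕ) (hk : 1 ≤ k)
    (g : ℤ) (hg : g ∈ Finset.Icc (-(((p : ℤ) - 1) / 2)) (((p : ℤ) - 1) / 2)) :
    ((Fintype.piFinset (fun _ : Fin k =>
        Finset.Icc (-(((p : ℤ) - 1) / 2)) (((p : ℤ) - 1) / 2))).filter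
      (fun f => ∑ i, f i = ((p : ℤ) - 1) / 2)).card ≤
    ((Fintype.piFinset (fun _ : Fin k =>
        Finset.Icc (-(((p : ℤ) - 1) / 2)) (((p : ℤ) - 1) / 2))).filter
      (fun f => ∑ i, f i = g)).card := by
  set m : ℤ := ((p : ℤ) - 1) / 2 with hmdef
  have hp2 : 2 ≤ p := hp.two_le
  have hm : 0 ≤ m := by
    have : (2 : ℤ) ≤ (p : ℤ) := by exact_mod_cast hp2
    have := Int.ediv_nonneg (a := (p : ℤ) - 1) (b := 2) (by omega) (by norm_num)
    omega
  rw [Finset.mem_Icc] at hg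
  have h : |g| ≤ |m| := by
    rw [abs_of_nonneg hm, abs_le]
    exact hg
  exact NN_abs m hm k g m h
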